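/- If a matrix A ∈ ℝ^{M×N} does not satisfy the complement property, then there exist vectors x, y ∈ ℝ^N with y ≠ x and y ≠ -x such that |Ax| = |Ay| entrywise. -/

import Mathlib

open Finset

/-- The complement property. -/
def ComplementProperty {M N : ℕ} (A : Matrix (Fin M) (Fin N) ℝ) : Prop :=
  ∀ S : Finset (Fin M),
    Submodule.span ℝ (A '' (S : Set (Fin M))) = ⊤ ∨
    Submodule.span ℝ (A '' ((Sᶜ : Finset (Fin M)) : Set (Fin M))) = ⊤

private lemma exists_orth_vec {N : ℕ} (s : Set (Fin N → ℝ))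
    (h : Submodule.span ℝ s ≠ ⊤) :
    ∃ u : Fin N → ℝ, u ≠ 0 ∧ ∀ w ∈ s, ∑ j, w j * u j = 0 := by
  let e := (WithLp.linearEquiv 2 ℝ (Fin N → ℝ)).symm
  let K : Submodule ℝ (EuclideanSpace ℝ (Fin N)) := Submodule.span ℝ (e '' s)
  have hK : K ≠ ⊤ := by
    intro hK'
    apply h
    have hm : Submodule.map (e : (Fin N → ℝ) →ₗ[ℝ] EuclideanSpace ℝ (Fin N))
        (Submodule.span ℝ s) = ⊤ := by rw [Submodule.map_span]; exact hK'
    rw [eq_top_iff]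
    intro x _
    have hx : e x ∈ Submodule.map (e : (Fin N → ℝ) →ₗ[ℝ] EuclideanSpace ℝ (Fin N))
        (Submodule.span ℝ s) := hm ▸ Submodule.mem_top
    obtain ⟨y, hy, hyx⟩ := Submodule.mem_map.mp hx
    exact e.injective hyx ▸ hy
  have hb : Kᗮ ≠ ⊥ := fun hbot => hK (Submodule.orthogonal_eq_bot_iff.mp hbot)
  obtain ⟨u, hu, hu0⟩ := Submodule.exists_mem_ne_zero_of_ne_bot hb
  refine ⟨u, fun h0 => hu0 (by ext j; simpa using congrFun h0 j), fun w hw => ?_⟩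
  have := (Submodule.mem_orthogonal K u).mp hu (e w) (Submodule.subset_span (Set.mem_image_of_mem e hw))
  simpa [e, PiLp.inner_apply, RCLike.inner_apply, mul_comm] using this

theorem not_complement_property_implies_ambiguity
    {M N : ℕ} (A : Matrix (Fin M) (Fin N) ℝ)
    (hA : ¬ ComplementProperty A) :
    ∃ x y : Fin N → ℝ, y ≠ x ∧ y ≠ -x ∧
      ∀ i : Fin M, |A.mulVec x i| = |A.mulVec y i| := by
  simp only [ComplementProperty, not_forall, not_or] at hA
  obtain ⟨S, h1, h2⟩ := hA
  obtain ⟨u, hu0, hu⟩ := exists_orth_vec _ h1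
  obtain ⟨v, hv0, hv⟩ := exists_orth_vec _ h2
  refine ⟨u + v, u - v, ?_, ?_, ?_⟩
  · intro h
    apply hv0
    have h2 : v + v = 0 := by linear_combination (norm := module) -h
    funext j
    simpa using add_self_eq_zero.mp (congrFun h2 j)
  · intro h
    apply hu0
    have h2 : u + u = 0 := by linear_combination (norm := module) h
    funext j
    simpa using add_self_eq_zero.mp (congrFun h2 j)
  · intro i
    have key : ∀ w : Fin N → ℝ, A.mulVec w i = ∑ j, A i j * w j := fun w => rfl
    by_cases hi : i ∈ S
    · have h0 : ∑ j, A i j * u j = 0 := hu (A i) ⟨i, by simpa using hi, rfl⟩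
      rw [key, key]
      simp only [Pi.add_apply, Pi.sub_apply, mul_add, mul_sub, Finset.sum_add_distrib,
        Finset.sum_sub_distrib, h0]
      rw [zero_add, zero_sub, abs_neg]
    · have h0 : ∑ j, A i j * v j = 0 := hv (A i) ⟨i, by simpa using hi, rfl⟩
      rw [key, key]
      simp only [Pi.add_apply, Pi.sub_apply, mul_add, mul_sub, Finset.sum_add_distrib,
        Finset.sum_sub_distrib, h0]
      rw [add_zero, sub_zero]
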